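/- Let 1 ≤ k ≤ n-1 and let f₀ : (0,1) → ℝ be measurable with ∫_0^{2b} |f₀(s)| s^{(k-1)/2} ds < ∞, where b = θₙ√(1-θₙ²) and 1/√2 ≤ θₙ < 1. Then for the zonal function f(x) = f₀(xₙ) on the half-ball, the integral of f over the k-chord tangent to the equator with center parameter θₙ equals π^{(k-1)/2} (1-θₙ²)^{-k/2} · (1/Γ((k+1)/2)) ∫_0^{2b} f₀(s) s^{(k-1)/2} (2b - s)^{(k-1)/2} ds. -/

import Mathlib

open MeasureTheory Set RealInnerProductSpace


lemma sqrt_pow_eq_rpow (m : ℕ) {x : ℝ} (hx : 0 ≤ x) :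
    Real.sqrt x ^ m = x ^ ((m:ℝ)/2) := by
  rw [Real.sqrt_eq_rpow, ← Real.rpow_natCast (x ^ (1/2:ℝ)) m, ← Real.rpow_mul hx]
  norm_num
  rw [one_div, inv_mul_eq_div]


lemma slice_vol (m : ℕ) (t : ℝ) (ht : t^2 < 1) :
    volume {y : Fin m → ℝ | ∑ i, y i ^ 2 < 1 - t^2}
      = ENNReal.ofReal (Real.sqrt (1 - t^2) ^ m
          * (Real.sqrt Real.pi ^ m / Real.Gamma (m/2+1))) := by
  set r : ℝ := Real.sqrt (1 - t^2) with hr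
  have h1t : (0:ℝ) < 1 - t^2 := by linarith
  have hr0 : 0 < r := Real.sqrt_pos.mpr h1t
  have hr2 : r^2 = 1 - t^2 := Real.sq_sqrt h1t.le
  have h1 : {y : Fin m → ℝ | ∑ i, y i ^ 2 < 1 - t^2}
      = (MeasurableEquiv.toLp 2 (Fin m → ℝ)).symm.symm ⁻¹' (Metric.ball 0 r) := by
    rw [EuclideanSpace.ball_zero_eq _ hr0.le]
    ext y
    simp [hr2]
  rw [h1, ((EuclideanSpace.volume_preserving_symm_measurableEquiv_toLp (Fin m)).symm).measure_preimage
      measurableSet_ball.nullMeasurableSet]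
  rcases Nat.eq_zero_or_pos m with hm | hm
  · subst hm
    have : Metric.ball (0 : EuclideanSpace ℝ (Fin 0)) r = Set.univ := by
      ext x
      simp [Metric.mem_ball, hr0, Subsingleton.elim x 0]
    rw [this]
    have huniv : (volume : Measure (EuclideanSpace ℝ (Fin 0))) Set.univ = 1 := by
      rw [← ((EuclideanSpace.volume_preserving_symm_measurableEquiv_toLp (Fin 0)).symm).measure_preimage
        MeasurableSet.univ.nullMeasurableSet]
      simp only [Set.preimage_univ]
      exact Measure.pi_empty_univ (α := Fin 0) (β := fun _ => ℝ) (μ := fun _ => volume)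
    rw [huniv]
    simp [Real.Gamma_one]
  · have : Nonempty (Fin m) := Fin.pos_iff_nonempty.mp hm
    rw [EuclideanSpace.volume_ball]
    rw [ENNReal.ofReal_mul (by positivity), ENNReal.ofReal_pow hr0.le]
    simp [Fintype.card_fin]

lemma slice_vol' (m : ℕ) (t : ℝ) (ht : 1 ≤ t^2) :
    volume {y : Fin m → ℝ | ∑ i, y i ^ 2 < 1 - t^2} = 0 := by
  convert measure_empty (μ := (volume : Measure (Fin m → ℝ)))
  ext y
  simp only [mem_setOf_eq, mem_empty_iff_false, iff_false, not_lt]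
  have : (0:ℝ) ≤ ∑ i, y i ^ 2 := Finset.sum_nonneg fun _ _ => sq_nonneg _
  linarith

lemma fubini_core (m : ℕ) (b : ℝ) (hb0 : 0 < b) (g₀ : ℝ → ℝ)
    (hg₀ : StronglyMeasurable g₀)
    (h5 : IntegrableOn (fun t => g₀ (b*t+b) * (b*t+b) ^ ((m:ℝ)/2)) (Ioo (-1:ℝ) 1) volume) :
    ∫ q in {q : ℝ × (Fin m → ℝ) | q.1^2 + ∑ i, q.2 i ^2 < 1}, g₀ (b*q.1+b)
        ∂((volume : Measure ℝ).prod (volume : Measure (Fin m → ℝ)))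
      = (Real.sqrt Real.pi ^ m / Real.Gamma (m/2+1)) *
          ∫ t in Ioo (-1:ℝ) 1, g₀ (b*t+b) * (1-t^2) ^ ((m:ℝ)/2) := by

  classical
  set c : ℝ := Real.sqrt Real.pi ^ m / Real.Gamma (m/2+1) with hc
  have hc0 : 0 ≤ c := by
    rw [hc]
    have h : 0 < Real.Gamma ((m:ℝ)/2+1) := Real.Gamma_pos_of_pos (by positivity)
    exact div_nonneg (pow_nonneg (Real.sqrt_nonneg _) _) h.le
  set A : Set (ℝ × (Fin m → ℝ)) := {q | q.1^2 + ∑ i, q.2 i ^2 < 1} with hA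
  have hAm : MeasurableSet A := by
    apply measurableSet_lt _ measurable_const
    fun_prop
  set B : ℝ → Set (Fin m → ℝ) := fun t => {y | ∑ i, y i ^ 2 < 1 - t^2} with hB
  have hBm : ∀ t, MeasurableSet (B t) := by
    intro t
    apply measurableSet_lt _ measurable_const
    fun_prop
  set v : ℝ → ℝ := fun t => (volume (B t)).toReal with hv
  have hvol : ∀ t, t^2 < 1 → volume (B t) = ENNReal.ofReal ((1-t^2) ^ ((m:ℝ)/2) * c) := by
    intro t ht
    rw [hB, slice_vol m t ht, sqrt_pow_eq_rpow m (by linarith : (0:ℝ) ≤ 1 - t^2)]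
  have hvol0 : ∀ t, 1 ≤ t^2 → volume (B t) = 0 := fun t ht => slice_vol' m t ht
  have hfin : ∀ t, volume (B t) < ⊤ := by
    intro t
    rcases lt_or_ge (t^2) 1 with h | h
    · rw [hvol t h]; exact ENNReal.ofReal_lt_top
    · rw [hvol0 t h]; exact ENNReal.zero_lt_top
  have hveq : ∀ t, t^2 < 1 → v t = (1-t^2) ^ ((m:ℝ)/2) * c := by
    intro t ht
    rw [hv]
    simp only
    rw [hvol t ht, ENNReal.toReal_ofReal (mul_nonneg (Real.rpow_nonneg (by linarith) _) hc0)]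
  have hvz : ∀ t, t ∉ Ioo (-1:ℝ) 1 → v t = 0 := by
    intro t ht
    have h1 : 1 ≤ t^2 := by
      simp only [mem_Ioo, not_and_or, not_lt] at ht
      rcases ht with h | h <;> nlinarith
    rw [hv]; simp only; rw [hvol0 t h1]; simp
  set φ : ℝ → ℝ := fun t => b*t+b with hφ
  set F : ℝ × (Fin m → ℝ) → ℝ := A.indicator (fun q => g₀ (φ q.1)) with hF
  have hφm : Measurable fun t : ℝ => g₀ (φ t) :=
    hg₀.measurable.comp ((measurable_id.const_mul b).add_const b)
  have hFm : AEStronglyMeasurable F ((volume : Measure ℝ).prod volume) :=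
    ((hφm.comp measurable_fst).indicator hAm).aestronglyMeasurable
  have hslice : ∀ t, (fun y => F (t,y)) = (B t).indicator (fun _ => g₀ (φ t)) := by
    intro t
    ext y
    have hmem : (t, y) ∈ A ↔ y ∈ B t := by
      simp only [hA, hB, mem_setOf_eq]
      constructor <;> intro h <;> linarith
    by_cases h : y ∈ B t
    · rw [hF, Set.indicator_of_mem (hmem.mpr h), Set.indicator_of_mem h]
    · rw [hF, Set.indicator_of_notMem (fun hh => h (hmem.mp hh)), Set.indicator_of_notMem h]
  have hinner : ∀ t, ∫ y, F (t, y) = g₀ (φ t) * v t := by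
    intro t
    rw [hslice t, integral_indicator (hBm t), setIntegral_const, smul_eq_mul, mul_comm]; rfl
  have hinnernorm : ∀ t, (∫ y, ‖F (t, y)‖) = ‖g₀ (φ t)‖ * v t := by
    intro t
    have : (fun y => ‖F (t,y)‖) = (B t).indicator (fun _ => ‖g₀ (φ t)‖) := by
      rw [show (fun y => ‖F (t,y)‖) = fun y => ‖(fun y => F (t,y)) y‖ from rfl, hslice t]
      ext y
      exact norm_indicator_eq_indicator_norm _ y
    rw [this, integral_indicator (hBm t), setIntegral_const, smul_eq_mul, mul_comm]; rfl
  -- integrability of the marginal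
  have hmargIntOn : IntegrableOn (fun t => ‖g₀ (φ t)‖ * v t) (Ioo (-1:ℝ) 1) volume := by
    have hEq : EqOn (fun t => ‖g₀ (φ t)‖ * v t)
        (fun t => ‖g₀ (φ t)‖ * ((1-t^2) ^ ((m:ℝ)/2) * c)) (Ioo (-1:ℝ) 1) := by
      intro t ht
      simp only
      rw [hveq t (by rcases ht with ⟨h1, h2⟩; nlinarith)]
    rw [integrableOn_congr_fun hEq measurableSet_Ioo]
    set K : ℝ := c * (2:ℝ) ^ ((m:ℝ)/2) / b ^ ((m:ℝ)/2) with hK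
    have hK0 : 0 ≤ K := by positivity
    refine Integrable.mono' ((h5.norm).const_mul K) ?_ ?_
    · have hme : Measurable fun t : ℝ => ‖g₀ (φ t)‖ * ((1-t^2) ^ ((m:ℝ)/2) * c) := by
        apply (hφm.norm).mul
        fun_prop
      exact hme.aestronglyMeasurable
    · filter_upwards [ae_restrict_mem measurableSet_Ioo] with t ht
      rcases ht with ⟨h1, h2⟩
      have h1t : (0:ℝ) < 1 + t := by linarith
      have hbt : 0 < b*t+b := by nlinarith
      have hsplit : (1-t^2 : ℝ) = (1-t) * (1+t) := by ring
      have hle : (1-t^2 : ℝ) ^ ((m:ℝ)/2) ≤ (2:ℝ) ^ ((m:ℝ)/2) * (1+t) ^ ((m:ℝ)/2) := by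
        rw [hsplit, Real.mul_rpow (by linarith) h1t.le]
        gcongr
        · linarith
      have hbteq : (b*t+b) ^ ((m:ℝ)/2) = b ^ ((m:ℝ)/2) * (1+t) ^ ((m:ℝ)/2) := by
        rw [← Real.mul_rpow hb0.le h1t.le]
        ring_nf
      have hb2 : (0:ℝ) ≤ (1-t^2) ^ ((m:ℝ)/2) * c :=
        mul_nonneg (Real.rpow_nonneg (by nlinarith) _) hc0
      calc ‖‖g₀ (φ t)‖ * ((1-t^2) ^ ((m:ℝ)/2) * c)‖
          = ‖g₀ (φ t)‖ * ((1-t^2) ^ ((m:ℝ)/2) * c) := by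
            rw [Real.norm_eq_abs, abs_of_nonneg (mul_nonneg (norm_nonneg _) hb2)]
        _ ≤ ‖g₀ (φ t)‖ * (((2:ℝ) ^ ((m:ℝ)/2) * (1+t) ^ ((m:ℝ)/2)) * c) := by
            gcongr
        _ = K * (‖g₀ (φ t)‖ * (b*t+b) ^ ((m:ℝ)/2)) := by
            rw [hbteq, hK]
            field_simp
        _ = K * ‖g₀ (b*t+b) * (b*t+b) ^ ((m:ℝ)/2)‖ := by
            rw [norm_mul, Real.norm_eq_abs ((b*t+b) ^ ((m:ℝ)/2)),
              abs_of_nonneg (Real.rpow_nonneg hbt.le _)]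
  have hmargInt : Integrable (fun t => ‖g₀ (φ t)‖ * v t) volume := by
    have : (fun t => ‖g₀ (φ t)‖ * v t)
        = (Ioo (-1:ℝ) 1).indicator (fun t => ‖g₀ (φ t)‖ * v t) := by
      ext t
      by_cases h : t ∈ Ioo (-1:ℝ) 1
      · rw [Set.indicator_of_mem h]
      · rw [Set.indicator_of_notMem h, hvz t h, mul_zero]
    rw [this, integrable_indicator_iff measurableSet_Ioo]
    exact hmargIntOn
  have hFInt : Integrable F ((volume : Measure ℝ).prod volume) := by
    rw [integrable_prod_iff hFm]
    constructor
    · refine Filter.Eventually.of_forall fun t => ?_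
      rw [hslice t, integrable_indicator_iff (hBm t)]
      exact integrableOn_const (hfin t).ne
    · apply hmargInt.congr
      exact Filter.Eventually.of_forall fun t => (hinnernorm t).symm
  -- main computation
  have step1 : ∫ q in A, g₀ (b*q.1+b)
        ∂((volume : Measure ℝ).prod (volume : Measure (Fin m → ℝ)))
      = ∫ t, g₀ (φ t) * v t := by
    rw [← integral_indicator hAm, ← hF, integral_prod F hFInt]
    exact integral_congr_ae (Filter.Eventually.of_forall fun t => hinner t)
  rw [step1]
  have step2 : ∫ t, g₀ (φ t) * v t = ∫ t in Ioo (-1:ℝ) 1, g₀ (φ t) * v t := by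
    rw [← integral_indicator measurableSet_Ioo]
    congr 1
    ext t
    by_cases h : t ∈ Ioo (-1:ℝ) 1
    · rw [Set.indicator_of_mem h]
    · rw [Set.indicator_of_notMem h, hvz t h, mul_zero]
  rw [step2]
  rw [← integral_const_mul]
  apply setIntegral_congr_fun measurableSet_Ioo
  intro t ht
  rcases ht with ⟨h1, h2⟩
  show g₀ (φ t) * v t = c * (g₀ (b*t+b) * (1-t^2) ^ ((m:ℝ)/2))
  rw [hveq t (by nlinarith)]
  ring


lemma subst_step (m : ℕ) (b : ℝ) (hb0 : 0 < b) (g₀ : ℝ → ℝ) :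
    ∫ t in Ioo (-1:ℝ) 1, g₀ (b*t+b) * (1-t^2) ^ ((m:ℝ)/2)
      = b⁻¹ * (b ^ (m:ℝ))⁻¹ *
        ∫ s in (0:ℝ)..(2*b), g₀ s * s ^ ((m:ℝ)/2) * (2*b-s) ^ ((m:ℝ)/2) := by
  have hbne : b ≠ 0 := hb0.ne'
  -- Ioo to interval integral
  have h1 : ∫ t in Ioo (-1:ℝ) 1, g₀ (b*t+b) * (1-t^2) ^ ((m:ℝ)/2)
      = ∫ t in (-1:ℝ)..1, g₀ (b*t+b) * (1-t^2) ^ ((m:ℝ)/2) := by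
    rw [intervalIntegral.integral_of_le (by norm_num), integral_Ioc_eq_integral_Ioo]
  rw [h1]
  set F : ℝ → ℝ := fun s => g₀ s * (1 - (s/b - 1)^2) ^ ((m:ℝ)/2) with hF
  have h2 : ∀ t : ℝ, F (b*t+b) = g₀ (b*t+b) * (1-t^2) ^ ((m:ℝ)/2) := by
    intro t
    rw [hF]
    have : (b*t+b)/b - 1 = t := by field_simp; ring
    simp only [this]
  have h3 : ∫ t in (-1:ℝ)..1, g₀ (b*t+b) * (1-t^2) ^ ((m:ℝ)/2)
      = ∫ t in (-1:ℝ)..1, F (b*t+b) := by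
    apply intervalIntegral.integral_congr
    intro t _
    exact (h2 t).symm
  rw [h3, intervalIntegral.integral_comp_mul_add F hbne b]
  have h4 : b*(-1)+b = (0:ℝ) := by ring
  have h5 : b*1+b = 2*b := by ring
  rw [h4, h5]
  have h6 : ∫ s in (0:ℝ)..(2*b), F s
      = ∫ s in (0:ℝ)..(2*b), (b ^ (m:ℝ))⁻¹ * (g₀ s * s ^ ((m:ℝ)/2) * (2*b-s) ^ ((m:ℝ)/2)) := by
    apply intervalIntegral.integral_congr_ae
    have h2bne : ∀ᵐ x : ℝ ∂volume, x ≠ 2*b := by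
      rw [ae_iff]
      simpa [not_not, Set.setOf_eq_eq_singleton] using Real.volume_singleton
    filter_upwards [h2bne] with s hs hmem
    rw [Set.uIoc_of_le (by linarith), mem_Ioc] at hmem
    have hs0 : 0 < s := hmem.1
    have hs2b : s < 2*b := lt_of_le_of_ne hmem.2 hs
    have key : 1 - (s/b - 1)^2 = s * (2*b - s) / b^2 := by field_simp; ring
    rw [hF]
    simp only [key]
    rw [Real.div_rpow (by nlinarith) (by positivity), Real.mul_rpow hs0.le (by linarith)]
    have hb2 : ((b^2) : ℝ) ^ ((m:ℝ)/2) = b ^ (m:ℝ) := by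
      rw [← Real.rpow_natCast b 2, ← Real.rpow_mul hb0.le,
        show ((2:ℕ):ℝ) * ((m:ℝ)/2) = ((m:ℕ):ℝ) by push_cast; ring]
    rw [hb2]
    ring
  rw [h6, intervalIntegral.integral_const_mul, smul_eq_mul]
  ring


lemma const_step (m : ℕ) (θn u : ℝ) (hθ0 : 0 < θn) (h1θ : 0 < 1 - θn^2)
    (hu : u = Real.sqrt (1 - θn^2)) :
    θn^(m+1) * (((θn*u))⁻¹ * ((θn*u) ^ (m:ℝ))⁻¹) = (1 - θn^2) ^ (-((m:ℝ)+1)/2) := by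
  have hu0 : 0 < u := by rw [hu]; exact Real.sqrt_pos.mpr h1θ
  have hR : (1-θn^2) ^ (-((m:ℝ)+1)/2) = (u ^ (m+1))⁻¹ := by
    rw [show (-((m:ℝ)+1)/2) = (1/2 : ℝ) * (-((m:ℝ)+1)) by ring, Real.rpow_mul h1θ.le,
      ← Real.sqrt_eq_rpow, ← hu, Real.rpow_neg hu0.le,
      show ((m:ℝ)+1) = ((m+1:ℕ):ℝ) by push_cast; ring, Real.rpow_natCast]
  rw [hR, Real.rpow_natCast]
  field_simp
  ring



set_option maxHeartbeats 1000000 in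
/-- Lemma 4.2: the integral of the zonal function `f(x) = f₀(xₙ)` over a tangent
`k`-chord of the half-ball with center parameter `θₙ` (an `A`-chord, `1/√2 ≤ θₙ < 1`),
in the parametrization `(If)(θ,ξ) = θₙᵏ ∫_{Bᵏ} f₀(b(⟪η,p⟫+1)) dη`, equals a
Riemann–Liouville-type fractional integral. -/
theorem tangent_chord_zonal (n k : ℕ) (hk : 1 ≤ k) (hkn : k ≤ n - 1)
    (θn : ℝ) (hθ : 1 / Real.sqrt 2 ≤ θn) (hθ1 : θn < 1)
    (b : ℝ) (hb : b = θn * Real.sqrt (1 - θn ^ 2))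
    (f₀ : ℝ → ℝ)
    (hf : IntegrableOn (fun s => f₀ s * s ^ (((k : ℝ) - 1) / 2)) (Set.Ioo 0 (2 * b)) volume)
    (p : EuclideanSpace ℝ (Fin k)) (hp : ‖p‖ = 1) :
    θn ^ k * ∫ η in Metric.ball (0 : EuclideanSpace ℝ (Fin k)) 1, f₀ (b * (⟪η, p⟫ + 1)) =
      Real.pi ^ (((k : ℝ) - 1) / 2) * (1 - θn ^ 2) ^ (-(k : ℝ) / 2) *
        (1 / Real.Gamma (((k : ℝ) + 1) / 2)) *
        ∫ s in (0:ℝ)..(2 * b),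
          f₀ s * s ^ (((k : ℝ) - 1) / 2) * (2 * b - s) ^ (((k : ℝ) - 1) / 2) := by
  obtain ⟨m, rfl⟩ : ∃ m, k = m + 1 := ⟨k - 1, by omega⟩
  have he : (((m+1 : ℕ) : ℝ) - 1) / 2 = (m:ℝ)/2 := by push_cast; ring
  have heneg : -(((m+1 : ℕ) : ℝ)) / 2 = -((m:ℝ)+1)/2 := by push_cast; ring
  have heg : ((((m+1 : ℕ) : ℝ)) + 1) / 2 = (m:ℝ)/2 + 1 := by push_cast; ring
  rw [he] at hf ⊢
  rw [heneg, heg]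
  -- positivity facts
  have hθ0 : 0 < θn := lt_of_lt_of_le (by positivity) hθ
  have h1θ : 0 < 1 - θn^2 := by nlinarith
  have hu0 : 0 < Real.sqrt (1 - θn^2) := Real.sqrt_pos.mpr h1θ
  have hb0 : 0 < b := by rw [hb]; positivity
  have hbne : b ≠ 0 := hb0.ne'
  -- Step A : rotate p to the first coordinate
  have stepA : ∫ η in Metric.ball (0 : EuclideanSpace ℝ (Fin (m+1))) 1, f₀ (b * (⟪η, p⟫ + 1)) =
      ∫ η in Metric.ball (0 : EuclideanSpace ℝ (Fin (m+1))) 1, f₀ (b * (η 0 + 1)) := by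
    set e₀ : EuclideanSpace ℝ (Fin (m+1)) := EuclideanSpace.single 0 1 with he₀
    have hne : ‖e₀‖ = 1 := by rw [he₀, EuclideanSpace.norm_single]; norm_num
    set R := Submodule.reflection (ℝ ∙ (e₀ - p))ᗮ with hRdef
    have hR : R e₀ = p := Submodule.reflection_sub (by rw [hne, hp])
    have hmp : MeasurePreserving R volume volume := R.measurePreserving
    have hemb : MeasurableEmbedding R := R.toHomeomorph.measurableEmbedding
    have hball : ⇑R ⁻¹' Metric.ball (0 : EuclideanSpace ℝ (Fin (m+1))) 1 = Metric.ball 0 1 := by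
      ext η; simp [Metric.mem_ball, dist_eq_norm]
    have key := hmp.setIntegral_preimage_emb hemb
      (fun η => f₀ (b * (⟪η, p⟫ + 1))) (Metric.ball (0 : EuclideanSpace ℝ (Fin (m+1))) 1)
    rw [hball] at key
    rw [← key]
    refine setIntegral_congr_fun Metric.isOpen_ball.measurableSet fun η _ => ?_
    have h2 : ⟪R η, p⟫ = η 0 := by
      rw [← hR, R.inner_map_map, he₀]
      simp [EuclideanSpace.inner_single_right]
    simp only [h2]
  rw [stepA]
  -- Step B : to the product space
  have stepB : ∫ η in Metric.ball (0 : EuclideanSpace ℝ (Fin (m+1))) 1, f₀ (b * (η 0 + 1)) =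
      ∫ q in {q : ℝ × (Fin m → ℝ) | q.1^2 + ∑ i, q.2 i ^2 < 1}, f₀ (b * (q.1 + 1))
        ∂((volume : Measure ℝ).prod (volume : Measure (Fin m → ℝ))) := by
    have h0 : Metric.ball (0 : EuclideanSpace ℝ (Fin (m+1))) 1
        = {x : EuclideanSpace ℝ (Fin (m+1)) | ∑ i, x i ^ 2 < 1} := by
      have := EuclideanSpace.ball_zero_eq (n := Fin (m+1)) 1 zero_le_one
      simpa using this
    rw [h0, ← Measure.volume_eq_prod]
    have e1 := (EuclideanSpace.volume_preserving_symm_measurableEquiv_toLp (Fin (m+1))).symm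
    have key1 := e1.setIntegral_preimage_emb
      (MeasurableEquiv.measurableEmbedding _)
      (fun x : EuclideanSpace ℝ (Fin (m+1)) => f₀ (b * (x 0 + 1)))
      {x : EuclideanSpace ℝ (Fin (m+1)) | ∑ i, x i ^ 2 < 1}
    rw [← key1]
    have hpre1 : (MeasurableEquiv.toLp 2 (Fin (m+1) → ℝ)).symm.symm ⁻¹'
        {x : EuclideanSpace ℝ (Fin (m+1)) | ∑ i, x i ^ 2 < 1}
        = {x : Fin (m+1) → ℝ | ∑ i, x i ^ 2 < 1} := by
      ext x; simp
    have happ1 : ∀ x : Fin (m+1) → ℝ,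
        (MeasurableEquiv.toLp 2 (Fin (m+1) → ℝ)).symm.symm x 0 = x 0 := fun _ => rfl
    simp only [hpre1, happ1]
    have e2 := (volume_preserving_piFinSuccAbove (fun _ : Fin (m+1) => ℝ) 0).symm
    have key2 := e2.setIntegral_preimage_emb (MeasurableEquiv.measurableEmbedding _)
      (fun x : Fin (m+1) → ℝ => f₀ (b * (x 0 + 1)))
      {x : Fin (m+1) → ℝ | ∑ i, x i ^ 2 < 1}
    rw [← key2]
    have happ2 : ∀ q : ℝ × (Fin m → ℝ),
        (MeasurableEquiv.piFinSuccAbove (fun _ : Fin (m+1) => ℝ) 0).symm q 0 = q.1 := by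
      intro q
      simp [MeasurableEquiv.piFinSuccAbove_symm_apply]
    have hpre2 : (MeasurableEquiv.piFinSuccAbove (fun _ : Fin (m+1) => ℝ) 0).symm ⁻¹'
        {x : Fin (m+1) → ℝ | ∑ i, x i ^ 2 < 1}
        = {q : ℝ × (Fin m → ℝ) | q.1^2 + ∑ i, q.2 i ^2 < 1} := by
      ext q
      simp only [Set.mem_preimage, Set.mem_setOf_eq,
        MeasurableEquiv.piFinSuccAbove_symm_apply, Fin.insertNth_zero']
      rw [Fin.sum_univ_succ]
      simp [Fin.cons_succ]
    simp only [hpre2, happ2]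
  rw [stepB]
  have hAm : MeasurableSet {q : ℝ × (Fin m → ℝ) | q.1^2 + ∑ i, q.2 i ^2 < 1} := by
    apply measurableSet_lt _ measurable_const
    fun_prop
  -- measurable representative of f₀
  have hsm := hf.1
  set G : ℝ → ℝ := hsm.mk _ with hG
  set g₀ : ℝ → ℝ := fun s => G s * s ^ (-((m:ℝ)/2)) with hg₀
  have hg₀sm : StronglyMeasurable g₀ :=
    hsm.stronglyMeasurable_mk.mul
      ((by fun_prop : Measurable fun s : ℝ => s ^ (-((m:ℝ)/2))).stronglyMeasurable)
  have haer : ∀ᵐ s ∂(volume.restrict (Ioo 0 (2*b))), f₀ s = g₀ s := by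
    filter_upwards [hsm.ae_eq_mk, ae_restrict_mem measurableSet_Ioo] with s h1 h2
    have hs0 : 0 < s := h2.1
    have hGs : f₀ s * s ^ ((m:ℝ)/2) = G s := h1
    have : f₀ s = f₀ s * s^((m:ℝ)/2) * s^(-((m:ℝ)/2)) := by
      rw [mul_assoc, ← Real.rpow_add hs0]
      simp
    rw [this, hGs]
  have hae : ∀ᵐ s ∂(volume : Measure ℝ), s ∈ Ioo 0 (2*b) → f₀ s = g₀ s :=
    ae_imp_of_ae_restrict haer
  -- replace f₀ by g₀ inside the product integral
  have hq : Measure.QuasiMeasurePreserving (fun t : ℝ => b*t+b) volume volume := by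
    refine ⟨by fun_prop, ?_⟩
    have h1 : (fun t : ℝ => b*t+b) = (fun u : ℝ => u + b) ∘ (fun t : ℝ => b*t) := rfl
    rw [h1, ← Measure.map_map (measurable_add_const b) (measurable_const_mul b),
      Real.map_volume_mul_left hbne, Measure.map_smul,
      (measurePreserving_add_right volume b).map_eq]
    exact Measure.smul_absolutelyContinuous
  have hae2 : ∀ᵐ t ∂(volume : Measure ℝ),
      (b*t+b ∈ Ioo 0 (2*b) → f₀ (b*t+b) = g₀ (b*t+b)) := hq.ae hae
  have hae3 : ∀ᵐ q ∂((volume : Measure ℝ).prod (volume : Measure (Fin m → ℝ))),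
      (b*q.1+b ∈ Ioo 0 (2*b) → f₀ (b*q.1+b) = g₀ (b*q.1+b)) :=
    Measure.quasiMeasurePreserving_fst.ae hae2
  have stepC : ∫ q in {q : ℝ × (Fin m → ℝ) | q.1^2 + ∑ i, q.2 i ^2 < 1}, f₀ (b * (q.1 + 1))
        ∂((volume : Measure ℝ).prod (volume : Measure (Fin m → ℝ)))
      = ∫ q in {q : ℝ × (Fin m → ℝ) | q.1^2 + ∑ i, q.2 i ^2 < 1}, g₀ (b*q.1+b)
        ∂((volume : Measure ℝ).prod (volume : Measure (Fin m → ℝ))) := by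
    apply setIntegral_congr_ae hAm
    filter_upwards [hae3] with q h hqA
    have hsum : (0:ℝ) ≤ ∑ i, q.2 i ^ 2 := Finset.sum_nonneg fun _ _ => sq_nonneg _
    have h1 : q.1^2 < 1 := by
      have := hqA
      change q.1^2 + ∑ i, q.2 i ^2 < 1 at this
      linarith
    have ha1 : -1 < q.1 := by nlinarith [sq_nonneg (q.1+1)]
    have ha2 : q.1 < 1 := by nlinarith [sq_nonneg (q.1-1)]
    have hmem : b*q.1+b ∈ Ioo 0 (2*b) := by
      constructor
      · nlinarith [mul_pos hb0 (by linarith : (0:ℝ) < q.1+1)]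
      · nlinarith [mul_pos hb0 (by linarith : (0:ℝ) < 1 - q.1)]
    have hrw : b * (q.1 + 1) = b*q.1+b := by ring
    rw [hrw]
    exact h hmem
  rw [stepC]
  -- integrability transfer
  have hf' : IntegrableOn (fun s => g₀ s * s ^ ((m:ℝ)/2)) (Ioo 0 (2*b)) volume := by
    refine hf.congr ?_
    filter_upwards [haer] with s h1
    rw [h1]
  have hmp2 : MeasurePreserving (fun t : ℝ => b*t+b) ((ENNReal.ofReal |b|) • volume) volume := by
    have h2 : MeasurePreserving (fun t : ℝ => b*t) ((ENNReal.ofReal |b|) • volume) volume := by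
      refine ⟨by fun_prop, ?_⟩
      rw [Measure.map_smul, Real.map_volume_mul_left hbne, smul_smul,
        ← ENNReal.ofReal_mul (abs_nonneg _), ← abs_mul, mul_inv_cancel₀ hbne, abs_one,
        ENNReal.ofReal_one, one_smul]
    exact (measurePreserving_add_right volume b).comp h2
  have hemb2 : MeasurableEmbedding (fun t : ℝ => b*t+b) :=
    ((Homeomorph.mulLeft₀ b hbne).trans (Homeomorph.addRight b)).measurableEmbedding
  have hpre : (fun t : ℝ => b*t+b) ⁻¹' (Ioo 0 (2*b)) = Ioo (-1:ℝ) 1 := by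
    ext t
    simp only [Set.mem_preimage, mem_Ioo]
    constructor
    · rintro ⟨h1, h2⟩
      constructor <;> nlinarith
    · rintro ⟨h1, h2⟩
      constructor <;> nlinarith
  have h5 : IntegrableOn (fun t => g₀ (b*t+b) * (b*t+b) ^ ((m:ℝ)/2)) (Ioo (-1:ℝ) 1) volume := by
    have h5' := (hmp2.integrableOn_comp_preimage hemb2).mpr hf'
    rw [hpre] at h5'
    rw [IntegrableOn, Measure.restrict_smul] at h5'
    have := (integrable_smul_measure
      (by simp [abs_of_pos hb0, hb0] : (ENNReal.ofReal |b| : ENNReal) ≠ 0)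
      ENNReal.ofReal_ne_top).mp h5'
    exact this.congr (Filter.Eventually.of_forall fun t => rfl)
  -- Fubini and the one-dimensional reduction
  rw [fubini_core m b hb0 g₀ hg₀sm h5, subst_step m b hb0 g₀]
  -- replace g₀ back by f₀
  have stepD : ∫ s in (0:ℝ)..(2*b), g₀ s * s ^ ((m:ℝ)/2) * (2*b-s) ^ ((m:ℝ)/2)
      = ∫ s in (0:ℝ)..(2*b), f₀ s * s ^ ((m:ℝ)/2) * (2*b-s) ^ ((m:ℝ)/2) := by
    apply intervalIntegral.integral_congr_ae
    have h2bne : ∀ᵐ x : ℝ ∂volume, x ≠ 2*b := by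
      rw [ae_iff]
      simpa [not_not, Set.setOf_eq_eq_singleton] using Real.volume_singleton
    filter_upwards [h2bne, hae] with s hs h hmem
    rw [Set.uIoc_of_le (by linarith), mem_Ioc] at hmem
    have : s ∈ Ioo 0 (2*b) := ⟨hmem.1, lt_of_le_of_ne hmem.2 hs⟩
    rw [h this]
  rw [stepD]
  -- constants
  have hcs := const_step m θn (Real.sqrt (1 - θn^2)) hθ0 h1θ rfl
  rw [← hb] at hcs
  have hpi : Real.sqrt Real.pi ^ m = Real.pi ^ ((m:ℝ)/2) :=
    sqrt_pow_eq_rpow m Real.pi_nonneg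
  calc θn ^ (m+1) * (Real.sqrt Real.pi ^ m / Real.Gamma ((m:ℝ)/2+1) *
        (b⁻¹ * (b ^ (m:ℝ))⁻¹ *
          ∫ s in (0:ℝ)..(2*b), f₀ s * s ^ ((m:ℝ)/2) * (2*b-s) ^ ((m:ℝ)/2)))
      = (θn ^ (m+1) * (b⁻¹ * (b ^ (m:ℝ))⁻¹)) * (Real.sqrt Real.pi ^ m / Real.Gamma ((m:ℝ)/2+1)) *
          ∫ s in (0:ℝ)..(2*b), f₀ s * s ^ ((m:ℝ)/2) * (2*b-s) ^ ((m:ℝ)/2) := by ring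
    _ = Real.pi ^ ((m:ℝ)/2) * (1 - θn ^ 2) ^ (-((m:ℝ)+1)/2) * (1 / Real.Gamma ((m:ℝ)/2 + 1)) *
          ∫ s in (0:ℝ)..(2*b), f₀ s * s ^ ((m:ℝ)/2) * (2*b-s) ^ ((m:ℝ)/2) := by
        rw [hcs, hpi]
        ring
    _ = _ := by norm_num [he]
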